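/- The unique continuation property UCP(P, Q) holds if and only if for every real λ > 0 the only u ∈ H with Pu − iλ·Q*(Qu) − λ²u = 0 is u = 0. -/

import Mathlib

/-- Lemma 3.6(6) together with its converse (bounded-operator form):
UCP(P, Q) holds iff for every real `λ > 0` the kernel of the damped pencil
`P − iλQ*Q − λ²` is trivial. -/
theorem ucp_iff_pencil_kernel_trivial
    {H Y : Type*} [NormedAddCommGroup H] [InnerProductSpace ℂ H] [CompleteSpace H]
    [NormedAddCommGroup Y] [InnerProductSpace ℂ Y] [CompleteSpace Y]
    (P : H →L[ℂ] H) (hP : IsSelfAdjoint P)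
    (hPnn : ∀ u : H, 0 ≤ (inner ℂ (P u) u : ℂ).re)
    (Q : H →L[ℂ] Y) :
    (∀ lam : ℝ, 0 < lam → ∀ u : H, u ≠ 0 → P u = ((lam : ℂ) ^ 2) • u → Q u ≠ 0) ↔
      (∀ lam : ℝ, 0 < lam → ∀ u : H,
        P u - (Complex.I * (lam : ℂ)) • (ContinuousLinearMap.adjoint Q) (Q u)
          - ((lam : ℂ) ^ 2) • u = 0 → u = 0) := by
  constructor
  · intro hUCP lam hlam u hu
    by_contra hne
    have h0 : (inner ℂ (P u - (Complex.I * (lam : ℂ)) • (ContinuousLinearMap.adjoint Q) (Q u)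
        - ((lam : ℂ) ^ 2) • u) u : ℂ) = 0 := by
      rw [hu, inner_zero_left]
    rw [inner_sub_left, inner_sub_left, inner_smul_left, inner_smul_left,
      ContinuousLinearMap.adjoint_inner_left] at h0
    have hsym : (inner ℂ (P u) u : ℂ) = inner ℂ u (P u) :=
      (ContinuousLinearMap.isSelfAdjoint_iff_isSymmetric.mp hP) u u
    have haim : (inner ℂ (P u) u : ℂ).im = 0 := by
      have h2 : (starRingEnd ℂ) (inner ℂ (P u) u : ℂ) = inner ℂ (P u) u := by
        rw [inner_conj_symm, ← hsym]
      exact Complex.conj_eq_iff_im.mp h2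
    have hQQ : (inner ℂ (Q u) (Q u) : ℂ) = (‖Q u‖ : ℂ) ^ 2 := by
      rw [inner_self_eq_norm_sq_to_K]; norm_num
    have huu : (inner ℂ u u : ℂ) = (‖u‖ : ℂ) ^ 2 := by
      rw [inner_self_eq_norm_sq_to_K]; norm_num
    rw [hQQ, huu] at h0
    rw [show ((‖Q u‖ : ℂ))^2 = ((‖Q u‖^2 : ℝ) : ℂ) by push_cast; ring,
        show ((‖u‖ : ℂ))^2 = ((‖u‖^2 : ℝ) : ℂ) by push_cast; ring] at h0
    have him := congrArg Complex.im h0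
    simp [Complex.sub_im, Complex.mul_im, Complex.mul_re, haim, ← Complex.ofReal_pow] at him
    have hQu : Q u = 0 := him.resolve_left (ne_of_gt hlam)
    have hPu : P u = ((lam : ℂ) ^ 2) • u := by
      have : P u - (Complex.I * (lam : ℂ)) • (ContinuousLinearMap.adjoint Q) (Q u)
          - ((lam : ℂ) ^ 2) • u = P u - ((lam : ℂ) ^ 2) • u := by
        rw [hQu]; simp
      rw [this] at hu
      linear_combination (norm := module) hu
    exact hUCP lam hlam u hne hPu hQu
  · intro hker lam hlam u hne hPu hQu
    apply hne
    apply hker lam hlam u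
    rw [hQu, hPu]
    simp
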